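/- Let α be a strictly positive allocation satisfying the input-balance equations α_{i,j}/(σ_{i,j} w_j) = α_{i,j'}/(σ_{i,j'} w_{j'}) for all i ≠ b and all j, j', together with the total-balance equations (α_{b,j}/σ_{b,j})² = Σ_{i ≠ b} (α_{i,j}/σ_{i,j})² for all j. Then the ratio α_{b,j}/(σ_{b,j} w_j) does not depend on j either; consequently there exist β_1, …, β_K > 0 such that α_{i,j} = w_j σ_{i,j} β_i for all 1 ≤ i ≤ K and 1 ≤ j ≤ D, and these β satisfy β_b² = Σ_{i ≠ b} β_i². -/

import Mathlib

open Finset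

/-- Input balance plus total balance imply that the ratio `α_{b,j}/(σ_{b,j} w_j)` is also
independent of `j`, hence `α_{i,j} = w_j σ_{i,j} β_i` for some positive `β` with
`β_b² = Σ_{i ≠ b} β_i²`. -/
theorem stmt_12
    {K D : ℕ} (hK : 2 ≤ K) (hD : 1 ≤ D)
    (b : Fin K)
    (σ : Fin K → Fin D → ℝ) (hσ : ∀ i j, 0 < σ i j)
    (w : Fin D → ℝ) (hw : ∀ j, 0 < w j) (hw1 : ∑ j, w j = 1)
    (α : Fin K → Fin D → ℝ) (hα : ∀ i j, 0 < α i j)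
    (hinput : ∀ i, i ≠ b → ∀ j j' : Fin D,
      α i j / (σ i j * w j) = α i j' / (σ i j' * w j'))
    (htotal : ∀ j, (α b j / σ b j) ^ 2 = ∑ i ∈ univ.erase b, (α i j / σ i j) ^ 2) :
    (∀ j j' : Fin D, α b j / (σ b j * w j) = α b j' / (σ b j' * w j')) ∧
    ∃ β : Fin K → ℝ, (∀ i, 0 < β i) ∧ (∀ i j, α i j = w j * σ i j * β i) ∧
      (β b) ^ 2 = ∑ i ∈ univ.erase b, (β i) ^ 2 := by
  set j0 : Fin D := ⟨0, hD⟩ with hj0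
  -- β for non-b indices
  set γ : Fin K → ℝ := fun i => α i j0 / (σ i j0 * w j0) with hγ
  have hγpos : ∀ i, 0 < γ i := fun i =>
    div_pos (hα i j0) (mul_pos (hσ i j0) (hw j0))
  have hrep : ∀ i, i ≠ b → ∀ j, α i j = w j * σ i j * γ i := by
    intro i hi j
    have h := hinput i hi j j0
    have hne : σ i j * w j ≠ 0 := (mul_pos (hσ i j) (hw j)).ne'
    field_simp [hγ] at h ⊢
    rw [div_eq_iff hne] at h; rw [h]; simp only [hγ]; ring
  -- sum of squares
  set S : ℝ := ∑ i ∈ univ.erase b, (γ i) ^ 2 with hS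
  have hSpos : 0 < S := by
    have hne : (univ.erase b).Nonempty := by
      have h1 : 1 < (univ : Finset (Fin K)).card := by
        simpa [Finset.card_univ] using lt_of_lt_of_le (by norm_num) hK
      have := Finset.card_erase_of_mem (Finset.mem_univ b)
      refine Finset.card_pos.mp ?_
      omega
    exact Finset.sum_pos (fun i hi => pow_pos (hγpos i) 2) hne
  set c : ℝ := Real.sqrt S with hc
  have hcpos : 0 < c := Real.sqrt_pos.mpr hSpos
  have hc2 : c ^ 2 = S := Real.sq_sqrt hSpos.le
  -- key: α b j / σ b j = w j * c
  have hkey : ∀ j, α b j / (σ b j) = w j * c := by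
    intro j
    have h1 : (α b j / σ b j) ^ 2 = (w j * c) ^ 2 := by
      rw [htotal j, mul_pow, hc2, hS, Finset.mul_sum]
      refine Finset.sum_congr rfl fun i hi => ?_
      have hib : i ≠ b := Finset.ne_of_mem_erase hi
      rw [hrep i hib j]
      have : σ i j ≠ 0 := (hσ i j).ne'
      field_simp
    have hp1 : 0 ≤ α b j / σ b j := (div_pos (hα b j) (hσ b j)).le
    have hp2 : 0 ≤ w j * c := (mul_pos (hw j) hcpos).le
    nlinarith [sq_nonneg (α b j / σ b j - w j * c), sq_nonneg (α b j / σ b j + w j * c)]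
  have hbrep : ∀ j, α b j = w j * σ b j * c := by
    intro j
    have := hkey j
    have hne : σ b j ≠ 0 := (hσ b j).ne'
    field_simp at this
    linarith
  constructor
  · intro j j'
    rw [hbrep j, hbrep j']
    have h1 : σ b j * w j ≠ 0 := (mul_pos (hσ b j) (hw j)).ne'
    have h2 : σ b j' * w j' ≠ 0 := (mul_pos (hσ b j') (hw j')).ne'
    rw [mul_comm (w j) (σ b j), mul_div_cancel_left₀ c h1, mul_comm (w j') (σ b j'), mul_div_cancel_left₀ c h2]
  · refine ⟨fun i => if i = b then c else γ i, fun i => ?_, fun i j => ?_, ?_⟩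
    · by_cases h : i = b <;> simp [h, hcpos, hγpos i]
    · by_cases h : i = b
      · subst h; simp [hbrep j]
      · simp [h, hrep i h j]
    · simp only [if_true, ite_true, eq_self_iff_true]
      rw [hc2, hS]
      refine Finset.sum_congr rfl fun i hi => ?_
      rw [if_neg (Finset.ne_of_mem_erase hi)]
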